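/- The Fourier transform of the Cauchy distribution with parameter γ > 0, i.e., the measure (γ/π)·dx/(γ² + x²), is λ ↦ e^{-γ|λ|}. -/

import Mathlib

open MeasureTheory Complex Real Set Filter
open scoped FourierTransform ENNReal NNReal

lemma integrableOn_cexp_neg {c : ℂ} (hc : 0 < c.re) :
    IntegrableOn (fun x : ℝ => Complex.exp (-(c * x))) (Ioi 0) := by
  apply (exp_neg_integrableOn_Ioi 0 hc).mono'
  · exact (Complex.continuous_exp.comp (by continuity)).aestronglyMeasurable
  · filter_upwards with x
    simp [Complex.norm_exp, Real.exp_le_exp, neg_re, mul_re, Complex.ofReal_re,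
      Complex.ofReal_im]

lemma integral_cexp_neg_mul_Ioi {c : ℂ} (hc : 0 < c.re) :
    ∫ x : ℝ in Ioi 0, Complex.exp (-(c * x)) = 1 / c := by
  have hc0 : c ≠ 0 := fun h => by simp [h] at hc
  have := integral_Ioi_of_hasDerivAt_of_tendsto
    (f := fun x : ℝ => -Complex.exp (-(c * x)) / c)
    (f' := fun x : ℝ => Complex.exp (-(c * x))) (a := 0) (m := 0)
    ?_ ?_ (integrableOn_cexp_neg hc) ?_
  · rw [this]; field_simp; simp
  · exact ((Complex.continuous_exp.comp (by continuity)).neg.div_const c).continuousWithinAt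
  · intro x _
    have : HasDerivAt (fun x : ℝ => -(c * x)) (-c) x := by
      simpa [Pi.neg_def] using ((hasDerivAt_id x).ofReal_comp.const_mul c).neg
    have := (this.cexp.div_const c).neg
    convert this using 1
    · ext y; simp only [Pi.neg_apply]; ring
    · field_simp
  · rw [show (0 : ℂ) = -0 / c by simp]
    apply Tendsto.div_const
    apply Tendsto.neg
    rw [tendsto_zero_iff_norm_tendsto_zero]
    have : (fun x : ℝ => ‖Complex.exp (-(c * x))‖) = fun x => Real.exp (-c.re * x) := by
      ext x
      simp [Complex.norm_exp, neg_re, mul_re, Complex.ofReal_re, Complex.ofReal_im, neg_mul]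
    rw [this]
    exact Real.tendsto_exp_atBot.comp (tendsto_id.const_mul_atTop_of_neg (neg_neg_iff_pos.2 hc))

lemma fourier_exp_abs {γ : ℝ} (hγ : 0 < γ) (ξ : ℝ) :
    𝓕 (fun x : ℝ => (Real.exp (-(γ * |x|)) : ℂ)) ξ =
      ((2 * γ / (γ ^ 2 + (2 * π * ξ) ^ 2) : ℝ) : ℂ) := by
  set c₁ : ℂ := γ + 2 * π * ξ * Complex.I with hc₁def
  set c₂ : ℂ := γ - 2 * π * ξ * Complex.I with hc₂def
  have hc₁ : 0 < c₁.re := by simp [hc₁def, hγ]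
  have hc₂ : 0 < c₂.re := by simp [hc₂def, hγ]
  rw [Real.fourier_real_eq_integral_exp_smul]
  set g : ℝ → ℂ := fun x => Complex.exp (↑(-2 * π * x * ξ) * Complex.I) •
      ((Real.exp (-(γ * |x|)) : ℝ) : ℂ) with hg
  have heq1 : EqOn (fun x : ℝ => Complex.exp (-(c₁ * x))) g (Ioi 0) := by
    intro x hx
    have hax : |x| = x := abs_of_pos hx
    simp only [g, smul_eq_mul, Complex.ofReal_exp]
    rw [← Complex.exp_add]
    congr 1
    rw [hc₁def]
    push_cast [hax]
    ring
  have heq2 : EqOn (fun x : ℝ => Complex.exp (-(c₂ * x))) (fun x => g (-x)) (Ici 0) := by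
    intro x hx
    have hax : |(-x)| = x := by rw [abs_neg, _root_.abs_of_nonneg hx]
    simp only [g, smul_eq_mul, Complex.ofReal_exp]
    rw [← Complex.exp_add]
    congr 1
    rw [hc₂def]
    push_cast [hax]
    ring
  have hi1 : IntegrableOn g (Ioi 0) :=
    (integrableOn_cexp_neg hc₁).congr_fun heq1 measurableSet_Ioi
  have hi2 : IntegrableOn g (Iic 0) := by
    rw [← (Measure.measurePreserving_neg (volume : Measure ℝ)).integrableOn_comp_preimage
        (Homeomorph.neg ℝ).measurableEmbedding]
    simp only [Function.comp_def, neg_preimage, neg_Iic, neg_zero]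
    rw [integrableOn_Ici_iff_integrableOn_Ioi]
    exact (integrableOn_cexp_neg hc₂).congr_fun
      (fun x hx => heq2 (le_of_lt (show (0:ℝ) < x from hx))) measurableSet_Ioi
  have h1 : ∫ x in Ioi (0:ℝ), g x = 1 / c₁ := by
    rw [← integral_cexp_neg_mul_Ioi hc₁]
    exact (setIntegral_congr_fun measurableSet_Ioi heq1).symm
  have h2 : ∫ x in Iic (0:ℝ), g x = 1 / c₂ := by
    rw [show Iic (0:ℝ) = Iic (-0) by norm_num, ← integral_comp_neg_Ioi,
      ← integral_cexp_neg_mul_Ioi hc₂]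
    exact (setIntegral_congr_fun measurableSet_Ioi
      (fun x hx => heq2 (le_of_lt hx))).symm
  rw [← intervalIntegral.integral_Iic_add_Ioi hi2 hi1, h1, h2]
  have hne₁ : c₁ ≠ 0 := fun h => by simp [h] at hc₁
  have hne₂ : c₂ ≠ 0 := fun h => by simp [h] at hc₂
  have hdR : (0:ℝ) < γ ^ 2 + (2 * π * ξ) ^ 2 := by positivity
  have hd : ((γ ^ 2 + (2 * π * ξ) ^ 2 : ℝ) : ℂ) ≠ 0 := by
    exact_mod_cast hdR.ne'
  rw [div_add_div _ _ hne₂ hne₁]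
  push_cast at hd ⊢
  rw [div_eq_div_iff (mul_ne_zero hne₂ hne₁) hd, hc₁def, hc₂def]
  ring_nf
  rw [Complex.I_sq]
  ring

lemma integrable_exp_abs {γ : ℝ} (hγ : 0 < γ) :
    Integrable (fun x : ℝ => (Real.exp (-(γ * |x|)) : ℂ)) := by
  have hcγ : 0 < ((γ : ℂ)).re := by simpa using hγ
  rw [← integrableOn_univ, ← Iic_union_Ioi (a := (0:ℝ)), integrableOn_union]
  constructor
  · rw [← (Measure.measurePreserving_neg (volume : Measure ℝ)).integrableOn_comp_preimage
        (Homeomorph.neg ℝ).measurableEmbedding]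
    simp only [Function.comp_def, neg_preimage, neg_Iic, neg_zero]
    rw [integrableOn_Ici_iff_integrableOn_Ioi]
    apply (integrableOn_cexp_neg hcγ).congr_fun _ measurableSet_Ioi
    intro x hx
    simp only [Complex.ofReal_exp, abs_neg, abs_of_pos (show (0:ℝ) < x from hx), Complex.ofReal_neg,
      Complex.ofReal_mul]
  · apply (integrableOn_cexp_neg hcγ).congr_fun _ measurableSet_Ioi
    intro x hx
    simp only [Complex.ofReal_exp, abs_of_pos (show (0:ℝ) < x from hx), Complex.ofReal_neg, Complex.ofReal_mul]

lemma integrable_fourier_exp_abs {γ : ℝ} (hγ : 0 < γ) :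
    Integrable (𝓕 (fun x : ℝ => (Real.exp (-(γ * |x|)) : ℂ))) := by
  have : 𝓕 (fun x : ℝ => (Real.exp (-(γ * |x|)) : ℂ)) =
      fun ξ => ((2 * γ / (γ ^ 2 + (2 * π * ξ) ^ 2) : ℝ) : ℂ) := funext (fourier_exp_abs hγ)
  rw [this]
  have hπ := Real.pi_pos
  have hR : (2 * π / γ : ℝ) ≠ 0 := by positivity
  have h := (integrable_inv_one_add_sq.comp_mul_left' hR).const_mul (2 / γ)
  have heq : (fun ξ : ℝ => 2 * γ / (γ ^ 2 + (2 * π * ξ) ^ 2)) =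
      fun ξ => 2 / γ * (1 + (2 * π / γ * ξ) ^ 2)⁻¹ := by
    funext ξ
    have h1 : (0:ℝ) < γ ^ 2 + (2 * π * ξ) ^ 2 := by positivity
    have h2 : (0:ℝ) < 1 + (2 * π / γ * ξ) ^ 2 := by positivity
    field_simp
  have h2 : Integrable (fun ξ : ℝ => 2 * γ / (γ ^ 2 + (2 * π * ξ) ^ 2)) := heq ▸ h
  exact h2.ofReal

open MeasureTheory Complex

theorem cauchy_fourier_transform (γ : ℝ) (hγ : 0 < γ) (lam : ℝ) :
    ∫ x : ℝ, Complex.exp (Complex.I * lam * x)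
        ∂((volume : Measure ℝ).withDensity
            fun x => ENNReal.ofReal (γ / (Real.pi * (γ ^ 2 + x ^ 2)))) =
      (Real.exp (-γ * |lam|) : ℝ) := by
  have hπ : (0:ℝ) < π := Real.pi_pos
  set f : ℝ → ℂ := fun x => (Real.exp (-(γ * |x|)) : ℂ) with hf
  set ρ : ℝ → ℝ := fun x => γ / (π * (γ ^ 2 + x ^ 2)) with hρ
  have hρpos : ∀ x, 0 < ρ x := fun x => by positivity
  set F : ℝ → ℂ := fun x => (ρ x : ℝ) • Complex.exp (Complex.I * lam * x) with hF
  have hmeas : Measurable fun x : ℝ => (ρ x).toNNReal := by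
    apply Measurable.real_toNNReal; fun_prop
  have step1 : ∫ x : ℝ, Complex.exp (Complex.I * lam * x)
        ∂((volume : Measure ℝ).withDensity fun x => ENNReal.ofReal (ρ x)) = ∫ x, F x := by
    rw [show (fun x => ENNReal.ofReal (ρ x)) = (fun x => (((ρ x).toNNReal : ℝ≥0) : ℝ≥0∞)) from rfl,
      integral_withDensity_eq_integral_smul hmeas]
    congr 1
    funext x
    rw [NNReal.smul_def, Real.coe_toNNReal _ (hρpos x).le]
  have key : ∫ ξ : ℝ, Complex.exp (↑(-2 * π * ξ * (-lam)) * Complex.I) • (𝓕 f) ξ = f lam := by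
    have hinv := (integrable_exp_abs hγ).fourierInv_fourier_eq (integrable_fourier_exp_abs hγ)
      (v := lam) (by fun_prop)
    rw [Real.fourierInv_eq_fourier_neg,
      Real.fourier_real_eq_integral_exp_smul] at hinv
    exact hinv
  have expand : ∀ ξ : ℝ, Complex.exp (↑(-2 * π * ξ * (-lam)) * Complex.I) • (𝓕 f) ξ
      = (2 * π : ℝ) • F (2 * π * ξ) := by
    intro ξ
    rw [fourier_exp_abs hγ ξ]
    have hcoef : (2 * π) * ρ (2 * π * ξ) = 2 * γ / (γ ^ 2 + (2 * π * ξ) ^ 2) := by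
      simp only [ρ]
      have h1 : (0:ℝ) < γ ^ 2 + (2 * π * ξ) ^ 2 := by positivity
      field_simp
    show _ = (2 * π : ℝ) • ((ρ (2 * π * ξ) : ℝ) • Complex.exp (Complex.I * lam * ((2 * π * ξ : ℝ) : ℂ)))
    rw [smul_smul, hcoef, Complex.real_smul, smul_eq_mul, mul_comm]
    congr 2
    push_cast
    ring
  have scale : ∫ ξ : ℝ, F (2 * π * ξ) = |(2 * π : ℝ)⁻¹| • ∫ x, F x :=
    MeasureTheory.Measure.integral_comp_mul_left F (2 * π)
  have step2 : ∫ x, F x = f lam := by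
    rw [← key]
    simp_rw [expand]
    rw [integral_smul, scale, smul_smul, abs_of_pos (by positivity : (0:ℝ) < (2*π:ℝ)⁻¹),
      mul_inv_cancel₀ (by positivity : (2*π:ℝ) ≠ 0), one_smul]
  have hmeq : (fun x : ℝ => ENNReal.ofReal (γ / (Real.pi * (γ ^ 2 + x ^ 2)))) =
      fun x => ENNReal.ofReal (ρ x) := rfl
  rw [hmeq, step1, step2]
  simp [f, neg_mul]
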